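/- Let R and T be algebraic curvature tensors on an n-dimensional Euclidean vector space. Set α = ∑ R_{tpsq}T_{tpkl}T_{sqkl} and β = ∑ R_{tspq}T_{tjpl}T_{sjql}. Then ∑ R_{pstq}T_{tjpl}T_{sjql} = -α/4 + β. -/

import Mathlib

open Finset

private abbrev P6 (n : ℕ) := Fin n × Fin n × Fin n × Fin n × Fin n × Fin n

private def Gm {n : ℕ} (R T : Fin n → Fin n → Fin n → Fin n → ℝ) (x : P6 n) : ℝ :=
  R x.1 x.2.1 x.2.2.1 x.2.2.2.1 * T x.2.2.1 x.2.2.2.2.1 x.1 x.2.2.2.2.2 *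
    T x.2.1 x.2.2.2.2.1 x.2.2.2.1 x.2.2.2.2.2

private def Bm {n : ℕ} (R T : Fin n → Fin n → Fin n → Fin n → ℝ) (x : P6 n) : ℝ :=
  R x.1 x.2.1 x.2.2.1 x.2.2.2.1 * T x.1 x.2.2.2.2.1 x.2.2.1 x.2.2.2.2.2 *
    T x.2.1 x.2.2.2.2.1 x.2.2.2.1 x.2.2.2.2.2

private def Fm {n : ℕ} (R T : Fin n → Fin n → Fin n → Fin n → ℝ) (x : P6 n) : ℝ :=
  R x.1 x.2.1 x.2.2.1 x.2.2.2.1 * T x.1 x.2.2.2.2.1 x.2.1 x.2.2.2.2.2 *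
    T x.2.2.1 x.2.2.2.2.1 x.2.2.2.1 x.2.2.2.2.2

private def Hm {n : ℕ} (R T : Fin n → Fin n → Fin n → Fin n → ℝ) (x : P6 n) : ℝ :=
  R x.1 x.2.1 x.2.2.1 x.2.2.2.1 * T x.1 x.2.1 x.2.2.2.2.1 x.2.2.2.2.2 *
    T x.2.2.1 x.2.2.2.2.1 x.2.2.2.1 x.2.2.2.2.2

private def Am {n : ℕ} (R T : Fin n → Fin n → Fin n → Fin n → ℝ) (x : P6 n) : ℝ :=
  R x.1 x.2.1 x.2.2.1 x.2.2.2.1 * T x.1 x.2.1 x.2.2.2.2.1 x.2.2.2.2.2 *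
    T x.2.2.1 x.2.2.2.1 x.2.2.2.2.1 x.2.2.2.2.2

private def s12 {n : ℕ} : P6 n ≃ P6 n :=
  ⟨fun x => (x.2.1, x.1, x.2.2), fun x => (x.2.1, x.1, x.2.2), fun _ => rfl, fun _ => rfl⟩

private def s13 {n : ℕ} : P6 n ≃ P6 n :=
  ⟨fun x => (x.2.2.1, x.2.1, x.1, x.2.2.2), fun x => (x.2.2.1, x.2.1, x.1, x.2.2.2),
    fun _ => rfl, fun _ => rfl⟩

private def scyc {n : ℕ} : P6 n ≃ P6 n :=
  ⟨fun x => (x.2.2.1, x.1, x.2.1, x.2.2.2), fun x => (x.2.1, x.2.2.1, x.1, x.2.2.2),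
    fun _ => rfl, fun _ => rfl⟩

private def s34 {n : ℕ} : P6 n ≃ P6 n :=
  ⟨fun x => (x.1, x.2.1, x.2.2.2.1, x.2.2.1, x.2.2.2.2),
    fun x => (x.1, x.2.1, x.2.2.2.1, x.2.2.1, x.2.2.2.2), fun _ => rfl, fun _ => rfl⟩

theorem curvature_contraction_beta
    (n : ℕ) (R T : Fin n → Fin n → Fin n → Fin n → ℝ)
    (hRa : ∀ i j k l, R i j k l = - R j i k l)
    (hRb : ∀ i j k l, R i j k l = - R i j l k)
    (hRc : ∀ i j k l, R i j k l = R k l i j)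
    (hRbianchi : ∀ i j k l, R i j k l + R j k i l + R k i j l = 0)
    (hTa : ∀ i j k l, T i j k l = - T j i k l)
    (hTb : ∀ i j k l, T i j k l = - T i j l k)
    (hTc : ∀ i j k l, T i j k l = T k l i j)
    (hTbianchi : ∀ i j k l, T i j k l + T j k i l + T k i j l = 0)
    (α β : ℝ)
    (hα : α = ∑ t, ∑ p, ∑ s, ∑ q, ∑ k, ∑ l, R t p s q * T t p k l * T s q k l)
    (hβ : β = ∑ t, ∑ s, ∑ p, ∑ q, ∑ j, ∑ l, R t s p q * T t j p l * T s j q l) :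
    (∑ p, ∑ s, ∑ t, ∑ q, ∑ j, ∑ l, R p s t q * T t j p l * T s j q l) = - α / 4 + β := by
  have pack : ∀ f : Fin n → Fin n → Fin n → Fin n → Fin n → Fin n → ℝ,
      (∑ a, ∑ b, ∑ c, ∑ d, ∑ e, ∑ g, f a b c d e g)
        = ∑ x : P6 n, f x.1 x.2.1 x.2.2.1 x.2.2.2.1 x.2.2.2.2.1 x.2.2.2.2.2 := by
    intro f
    simp only [Fintype.sum_prod_type]
  have hXg : (∑ p, ∑ s, ∑ t, ∑ q, ∑ j, ∑ l, R p s t q * T t j p l * T s j q l)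
      = ∑ x : P6 n, Gm R T x := by
    rw [pack]; rfl
  have hαg : α = ∑ x : P6 n, Am R T x := by
    rw [hα, pack]; rfl
  have hβg : β = ∑ x : P6 n, Bm R T x := by
    rw [hβ, pack]; rfl
  -- Step 1: X = β - Y  (first Bianchi identity on R)
  have key1 : (∑ x : P6 n, Gm R T x)
      = (∑ x : P6 n, Bm R T x) - ∑ x : P6 n, Fm R T x := by
    calc (∑ x : P6 n, Gm R T x)
        = ∑ x : P6 n, (Bm R T (s13 x) - Fm R T (scyc x)) := by
          refine Finset.sum_congr rfl fun x _ => ?_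
          obtain ⟨a, b, c, d, e, f⟩ := x
          simp only [Gm, Bm, Fm, s13, scyc, Equiv.coe_fn_mk]
          linear_combination (T c e a f * T b e d f) * hRbianchi a b c d -
            (T c e a f * T b e d f) * hRa b c a d
      _ = (∑ x : P6 n, Bm R T (s13 x)) - ∑ x : P6 n, Fm R T (scyc x) :=
          Finset.sum_sub_distrib _ _
      _ = _ := by rw [Equiv.sum_comp s13 (Bm R T), Equiv.sum_comp scyc (Fm R T)]
  -- Step 2: Z = 2Y
  have key2 : (∑ x : P6 n, Hm R T x)
      = (∑ x : P6 n, Fm R T x) + ∑ x : P6 n, Fm R T x := by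
    calc (∑ x : P6 n, Hm R T x)
        = ∑ x : P6 n, (Fm R T x + Fm R T (s12 x)) := by
          refine Finset.sum_congr rfl fun x _ => ?_
          obtain ⟨a, b, c, d, e, f⟩ := x
          simp only [Hm, Fm, s12, Equiv.coe_fn_mk]
          linear_combination (-(T c e d f * T b e a f)) * hRa b a c d +
            (-(R a b c d * T c e d f)) * hTbianchi a e b f +
            (R a b c d * T c e d f) * hTa e b a f +
            (R a b c d * T c e d f) * hTa b a e f
      _ = (∑ x : P6 n, Fm R T x) + ∑ x : P6 n, Fm R T (s12 x) :=
          Finset.sum_add_distrib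
      _ = _ := by rw [Equiv.sum_comp s12 (Fm R T)]
  -- Step 3: α = 2Z
  have key3 : (∑ x : P6 n, Am R T x)
      = (∑ x : P6 n, Hm R T x) + ∑ x : P6 n, Hm R T x := by
    calc (∑ x : P6 n, Am R T x)
        = ∑ x : P6 n, (Hm R T x + Hm R T (s34 x)) := by
          refine Finset.sum_congr rfl fun x _ => ?_
          obtain ⟨a, b, c, d, e, f⟩ := x
          simp only [Am, Hm, s34, Equiv.coe_fn_mk]
          linear_combination (-(T a b e f * T d e c f)) * hRb a b d c +
            (-(R a b c d * T a b e f)) * hTbianchi c e d f +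
            (R a b c d * T a b e f) * hTa e d c f +
            (R a b c d * T a b e f) * hTa d c e f
      _ = (∑ x : P6 n, Hm R T x) + ∑ x : P6 n, Hm R T (s34 x) :=
          Finset.sum_add_distrib
      _ = _ := by rw [Equiv.sum_comp s34 (Hm R T)]
  rw [hXg, hαg, hβg, key1]
  linarith [key2, key3]
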